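/- For all non-negative integers p, q, k: ∑_{j=0}^{p} (-1)^j * C(p+q+k+1, p-j) * C(q+j, q) * C(q+k+1+j, k) = C(p+q+k+1, k). -/

import Mathlib

open Finset

/-- subset-of-subset identity -/
lemma choose_sub_sub (N a k : ℕ) (h : a + k ≤ N) :
    N.choose a * (N - a).choose k = N.choose k * (N - k).choose a := by
  have h1 := Nat.choose_mul (n := N) (k := a + k) (s := a) (Nat.le_add_right a k)
  have h2 := Nat.choose_mul (n := N) (k := a + k) (s := k) (Nat.le_add_left k a)
  rw [Nat.add_sub_cancel_left] at h1
  rw [Nat.add_sub_cancel] at h2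
  rw [Nat.choose_symm_add] at h1
  rw [← h1]
  exact h2

/-- L1 : G(q, p+1) = H(q, p+1) + H(q, p) -/
lemma lemL1 (q p : ℕ) :
    ∑ j ∈ range (p + 1 + 1), (-1 : ℤ) ^ j * ((q + 1).choose (p + 1 - j)) * ((q + j).choose q)
    = (∑ j ∈ range (p + 1 + 1), (-1 : ℤ) ^ j * ((q + 1).choose (p + 1 - j)) * ((q + 1 + j).choose (q + 1)))
      + ∑ j ∈ range (p + 1), (-1 : ℤ) ^ j * ((q + 1).choose (p - j)) * ((q + 1 + j).choose (q + 1)) := by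
  have key : ∀ j : ℕ, ((q + j).choose q : ℤ)
      = ((q + 1 + j).choose (q + 1) : ℤ) - ((q + j).choose (q + 1) : ℤ) := by
    intro j
    have h : (q + 1 + j).choose (q + 1) = (q + j).choose q + (q + j).choose (q + 1) := by
      have e : q + 1 + j = (q + j) + 1 := by ring
      rw [e]
      exact Nat.choose_succ_succ' (q + j) q
    rw [h]
    push_cast
    ring
  have step1 : ∑ j ∈ range (p + 1 + 1), (-1 : ℤ) ^ j * ((q + 1).choose (p + 1 - j)) * ((q + j).choose q)
      = (∑ j ∈ range (p + 1 + 1), (-1 : ℤ) ^ j * ((q + 1).choose (p + 1 - j)) * ((q + 1 + j).choose (q + 1)))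
        - ∑ j ∈ range (p + 1 + 1), (-1 : ℤ) ^ j * ((q + 1).choose (p + 1 - j)) * ((q + j).choose (q + 1)) := by
    rw [← Finset.sum_sub_distrib]
    apply Finset.sum_congr rfl
    intro j _
    rw [key j]
    ring
  have step2 : ∑ j ∈ range (p + 1 + 1), (-1 : ℤ) ^ j * ((q + 1).choose (p + 1 - j)) * ((q + j).choose (q + 1))
      = - ∑ j ∈ range (p + 1), (-1 : ℤ) ^ j * ((q + 1).choose (p - j)) * ((q + 1 + j).choose (q + 1)) := by
    rw [Finset.sum_range_succ']
    have h0 : ((q + 0).choose (q + 1) : ℤ) = 0 := by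
      norm_num [Nat.choose_succ_self]
    have hterm : ∀ j : ℕ, (-1 : ℤ) ^ (j + 1) * ((q + 1).choose (p + 1 - (j + 1))) * ((q + (j + 1)).choose (q + 1))
        = -((-1 : ℤ) ^ j * ((q + 1).choose (p - j)) * ((q + 1 + j).choose (q + 1))) := by
      intro j
      have e1 : p + 1 - (j + 1) = p - j := by omega
      have e2 : q + (j + 1) = q + 1 + j := by ring
      rw [e1, e2]
      ring
    rw [Finset.sum_congr rfl fun j _ => hterm j]
    rw [Finset.sum_neg_distrib]
    simp [h0]
  rw [step1, step2]
  ring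

/-- L2 : G(q+1, p+1) = H(q, p+1) + H(q, p) -/
lemma lemL2 (q p : ℕ) :
    ∑ j ∈ range (p + 1 + 1), (-1 : ℤ) ^ j * ((q + 1 + 1).choose (p + 1 - j)) * ((q + 1 + j).choose (q + 1))
    = (∑ j ∈ range (p + 1 + 1), (-1 : ℤ) ^ j * ((q + 1).choose (p + 1 - j)) * ((q + 1 + j).choose (q + 1)))
      + ∑ j ∈ range (p + 1), (-1 : ℤ) ^ j * ((q + 1).choose (p - j)) * ((q + 1 + j).choose (q + 1)) := by
  rw [Finset.sum_range_succ, Finset.sum_range_succ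
    (f := fun j => (-1 : ℤ) ^ j * ((q + 1).choose (p + 1 - j)) * ((q + 1 + j).choose (q + 1)))]
  have main : ∑ j ∈ range (p + 1), (-1 : ℤ) ^ j * ((q + 1 + 1).choose (p + 1 - j)) * ((q + 1 + j).choose (q + 1))
      = (∑ j ∈ range (p + 1), (-1 : ℤ) ^ j * ((q + 1).choose (p + 1 - j)) * ((q + 1 + j).choose (q + 1)))
        + ∑ j ∈ range (p + 1), (-1 : ℤ) ^ j * ((q + 1).choose (p - j)) * ((q + 1 + j).choose (q + 1)) := by
    rw [← Finset.sum_add_distrib]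
    apply Finset.sum_congr rfl
    intro j hj
    have hj' : j < p + 1 := Finset.mem_range.mp hj
    have e : p + 1 - j = (p - j) + 1 := by omega
    rw [e, Nat.choose_succ_succ']
    push_cast
    ring
  rw [main]
  have e0 : p + 1 - (p + 1) = 0 := by omega
  rw [e0]
  simp [Nat.choose_zero_right]
  ring

/-- G is independent of q -/
lemma lemG (q : ℕ) : ∀ p : ℕ,
    ∑ j ∈ range (p + 1), (-1 : ℤ) ^ j * ((q + 1).choose (p - j)) * ((q + j).choose q)
    = if p = 0 then 1 else 0 := by
  induction q with
  | zero =>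
    intro p
    induction p with
    | zero => simp
    | succ n ih =>
      rw [Finset.sum_range_succ']
      have hterm : ∀ j : ℕ, (-1 : ℤ) ^ (j + 1) * ((0 + 1).choose (n + 1 - (j + 1))) * ((0 + (j + 1)).choose 0)
          = -((-1 : ℤ) ^ j * ((0 + 1).choose (n - j)) * ((0 + j).choose 0)) := by
        intro j
        have e1 : n + 1 - (j + 1) = n - j := by omega
        rw [e1]
        simp
        ring
      rw [Finset.sum_congr rfl fun j _ => hterm j]
      rw [Finset.sum_neg_distrib, ih]
      rcases Nat.eq_zero_or_pos n with hn | hn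
      · subst hn; simp
      · have hn1 : ¬(n = 0) := by omega
        have hc : (1).choose (n + 1) = 0 := Nat.choose_eq_zero_of_lt (by omega)
        simp [hn1, hc]
  | succ q ihq =>
    intro p
    cases p with
    | zero => simp
    | succ n =>
      rw [lemL2 q n, ← lemL1 q n, ihq (n + 1)]

/-- F : sum = C(t, p) -/
lemma lemF (q : ℕ) : ∀ t p : ℕ,
    ∑ j ∈ range (p + 1), (-1 : ℤ) ^ j * ((q + 1 + t).choose (p - j)) * ((q + j).choose q)
    = t.choose p := by
  intro t
  induction t with
  | zero =>
    intro p
    have := lemG q p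
    simp only [Nat.add_zero] at *
    rw [this]
    cases p with
    | zero => simp
    | succ n => simp [Nat.choose_eq_zero_of_lt (by omega : 0 < n + 1)]
  | succ t iht =>
    intro p
    cases p with
    | zero => simp
    | succ n =>
      rw [Finset.sum_range_succ]
      have main : ∑ j ∈ range (n + 1), (-1 : ℤ) ^ j * ((q + 1 + (t + 1)).choose (n + 1 - j)) * ((q + j).choose q)
          = (∑ j ∈ range (n + 1), (-1 : ℤ) ^ j * ((q + 1 + t).choose (n + 1 - j)) * ((q + j).choose q))
            + ∑ j ∈ range (n + 1), (-1 : ℤ) ^ j * ((q + 1 + t).choose (n - j)) * ((q + j).choose q) := by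
        rw [← Finset.sum_add_distrib]
        apply Finset.sum_congr rfl
        intro j hj
        have hj' : j < n + 1 := Finset.mem_range.mp hj
        have e : n + 1 - j = (n - j) + 1 := by omega
        have e2 : q + 1 + (t + 1) = (q + 1 + t) + 1 := by ring
        rw [e, e2, Nat.choose_succ_succ']
        push_cast
        ring
      rw [main]
      have hF1 := iht (n + 1)
      have hF2 := iht n
      rw [Finset.sum_range_succ] at hF1
      have e0 : n + 1 - (n + 1) = 0 := by omega
      rw [e0] at hF1 ⊢
      rw [Nat.choose_zero_right] at hF1
      rw [Nat.choose_zero_right]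
      rw [Nat.choose_succ_succ t n]
      push_cast
      push_cast at hF1
      linarith [hF1, hF2]

theorem binomial_identity_n0' (p q k : ℕ) :
    ∑ j ∈ Finset.range (p + 1),
      (-1 : ℤ) ^ j * ((p + q + k + 1).choose (p - j)) * ((q + j).choose q) *
        ((q + k + 1 + j).choose k)
    = (p + q + k + 1).choose k := by
  have key : ∀ j ∈ range (p + 1),
      (-1 : ℤ) ^ j * ((p + q + k + 1).choose (p - j)) * ((q + j).choose q) * ((q + k + 1 + j).choose k)
      = ((p + q + k + 1).choose k : ℤ) * ((-1 : ℤ) ^ j * ((p + q + 1).choose (p - j)) * ((q + j).choose q)) := by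
    intro j hj
    have hj' : j < p + 1 := Finset.mem_range.mp hj
    have h := choose_sub_sub (p + q + k + 1) (p - j) k (by omega)
    have e1 : p + q + k + 1 - (p - j) = q + k + 1 + j := by omega
    have e2 : p + q + k + 1 - k = p + q + 1 := by omega
    rw [e1, e2] at h
    have h' : (((p + q + k + 1).choose (p - j) : ℤ)) * ((q + k + 1 + j).choose k)
        = ((p + q + k + 1).choose k : ℤ) * ((p + q + 1).choose (p - j)) := by
      exact_mod_cast congrArg (Nat.cast : ℕ → ℤ) h
    calc (-1 : ℤ) ^ j * ((p + q + k + 1).choose (p - j)) * ((q + j).choose q) * ((q + k + 1 + j).choose k)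
        = (((p + q + k + 1).choose (p - j) : ℤ) * ((q + k + 1 + j).choose k)) * ((-1 : ℤ) ^ j * ((q + j).choose q)) := by ring
      _ = (((p + q + k + 1).choose k : ℤ) * ((p + q + 1).choose (p - j))) * ((-1 : ℤ) ^ j * ((q + j).choose q)) := by rw [h']
      _ = ((p + q + k + 1).choose k : ℤ) * ((-1 : ℤ) ^ j * ((p + q + 1).choose (p - j)) * ((q + j).choose q)) := by ring
  rw [Finset.sum_congr rfl key, ← Finset.mul_sum]
  have hF := lemF q p p
  have e : q + 1 + p = p + q + 1 := by ring
  rw [e] at hF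
  rw [hF, Nat.choose_self]
  simp
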